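/- Fix a, b, d₂ > 0, H'(0), G'(0) > 0 and κ₁ ∈ (-1/2, 0). Define ν₁(d₂) = ( -(a + b - d₂κ₁) + √((a + b - d₂κ₁)² - 4[a(b - d₂κ₁) - H'(0)G'(0)]) )/2. Then ν₁ is strictly decreasing in d₂ on (0,∞) and ν₁(d₂) → -a as d₂ → ∞. Consequently, if ν₁(Λ) > 0 for some Λ > 0, there exists a unique d̲₂ > Λ with ν₁(d̲₂) = 0 and ν₁(d₂)(d₂ - d̲₂) < 0 for all d₂ > Λ with d₂ ≠ d̲₂. -/
import Mathlib


open Set Filter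

private lemma sqrt_lemma {w c : ℝ} (hc : 0 < c) : w < Real.sqrt (w ^ 2 + 4 * c) := by
  have h0 : (0:ℝ) ≤ w ^ 2 + 4 * c := by positivity
  have hA := Real.sqrt_nonneg (w ^ 2 + 4 * c)
  have hA2 : (Real.sqrt (w ^ 2 + 4 * c)) ^ 2 = w ^ 2 + 4 * c := Real.sq_sqrt h0
  nlinarith

private lemma sqrt_lemma' {w c : ℝ} (hc : 0 < c) : -w < Real.sqrt (w ^ 2 + 4 * c) := by
  have := sqrt_lemma (w := -w) hc
  rwa [neg_sq] at this

private lemma mono_lemma {c u v : ℝ} (hc : 0 < c) (huv : u < v) :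
    u + Real.sqrt (u ^ 2 + 4 * c) < v + Real.sqrt (v ^ 2 + 4 * c) := by
  set A := Real.sqrt (u ^ 2 + 4 * c) with hAdef
  set B := Real.sqrt (v ^ 2 + 4 * c) with hBdef
  have hA2 : A ^ 2 = u ^ 2 + 4 * c := Real.sq_sqrt (by positivity)
  have hB2 : B ^ 2 = v ^ 2 + 4 * c := Real.sq_sqrt (by positivity)
  have p1 : u < A := sqrt_lemma hc
  have p2 : v < B := sqrt_lemma hc
  have p3 : 0 < A + u := by have := sqrt_lemma' (w := u) hc; rw [← hAdef] at this; linarith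
  have p4 : 0 < B + v := by have := sqrt_lemma' (w := v) hc; rw [← hBdef] at this; linarith
  by_contra h
  push_neg at h
  have t1 : 0 ≤ (u + A - v - B) * (A - u) := mul_nonneg (by linarith) (by linarith)
  have hs : 0 ≤ (B + v) * ((B - v) - (A - u)) := by nlinarith [t1]
  have hs2 : 0 ≤ (B - v) - (A - u) := by
    by_contra h'
    push_neg at h'
    nlinarith [mul_pos p4 (show (0:ℝ) < (A - u) - (B - v) by linarith)]
  linarith

theorem stmt_11 (a b H0 G0 κ₁ : ℝ) (ha : 0 < a) (hb : 0 < b)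
    (hH0 : 0 < H0) (hG0 : 0 < G0) (hκ : κ₁ ∈ Ioo (-(1/2) : ℝ) 0)
    (ν₁ : ℝ → ℝ)
    (hν : ∀ d2, ν₁ d2 = (-(a + b - d2 * κ₁)
      + Real.sqrt ((a + b - d2 * κ₁) ^ 2 - 4 * (a * (b - d2 * κ₁) - H0 * G0))) / 2) :
    StrictAntiOn ν₁ (Ioi 0) ∧ Tendsto ν₁ atTop (nhds (-a)) ∧
    ∀ Λ > 0, 0 < ν₁ Λ →
      ∃ dd > Λ, ν₁ dd = 0 ∧ (∀ d > Λ, ν₁ d = 0 → d = dd) ∧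
        ∀ d > Λ, d ≠ dd → ν₁ d * (d - dd) < 0 := by
  obtain ⟨hκ1, hκ2⟩ := hκ
  set c := H0 * G0 with hcdef
  have hc : 0 < c := mul_pos hH0 hG0
  have key : ∀ d, ν₁ d
      = -a + ((a - b + d * κ₁) + Real.sqrt ((a - b + d * κ₁) ^ 2 + 4 * c)) / 2 := by
    intro d
    rw [hν d]
    have h1 : (a + b - d * κ₁) ^ 2 - 4 * (a * (b - d * κ₁) - H0 * G0)
        = (a - b + d * κ₁) ^ 2 + 4 * c := by rw [hcdef]; ring
    rw [h1]; ring
  have hants : StrictAntiOn ν₁ (Ioi 0) := by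
    intro x _ y _ hxy
    rw [key x, key y]
    have huv : a - b + y * κ₁ < a - b + x * κ₁ := by nlinarith
    have := mono_lemma hc huv
    linarith
  have key2 : ∀ d, ν₁ d
      = -a + (2 * c) / (Real.sqrt ((a - b + d * κ₁) ^ 2 + 4 * c) - (a - b + d * κ₁)) := by
    intro d
    rw [key d]
    congr 1
    set w := a - b + d * κ₁ with hw
    have hA2 : (Real.sqrt (w ^ 2 + 4 * c)) ^ 2 = w ^ 2 + 4 * c := Real.sq_sqrt (by positivity)
    have hne : Real.sqrt (w ^ 2 + 4 * c) - w ≠ 0 := by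
      have := sqrt_lemma (w := w) hc
      intro h; linarith [sub_eq_zero.mp h]
    rw [div_eq_div_iff (by norm_num : (2:ℝ) ≠ 0) hne]
    linear_combination hA2
  have hlinf : Tendsto (fun d : ℝ => -(a - b + d * κ₁)) atTop atTop := by
    have h1 : Tendsto (fun d : ℝ => d * (-κ₁) + (b - a)) atTop atTop :=
      tendsto_atTop_add_const_right _ _ (tendsto_id.atTop_mul_const (by linarith))
    exact h1.congr fun d => by ring
  have hden : Tendsto
      (fun d : ℝ => Real.sqrt ((a - b + d * κ₁) ^ 2 + 4 * c) - (a - b + d * κ₁)) atTop atTop := by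
    apply tendsto_atTop_mono _ hlinf
    intro d
    have := Real.sqrt_nonneg ((a - b + d * κ₁) ^ 2 + 4 * c)
    linarith
  have hlim : Tendsto ν₁ atTop (nhds (-a)) := by
    have h0 : Tendsto (fun d : ℝ => -a + (2 * c) /
        (Real.sqrt ((a - b + d * κ₁) ^ 2 + 4 * c) - (a - b + d * κ₁))) atTop (nhds (-a + 0)) :=
      tendsto_const_nhds.add (tendsto_const_nhds.div_atTop hden)
    rw [add_zero] at h0
    exact h0.congr fun d => (key2 d).symm
  have hcont : Continuous ν₁ := by
    have hfe : ν₁ = fun d => -a + ((a - b + d * κ₁)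
        + Real.sqrt ((a - b + d * κ₁) ^ 2 + 4 * c)) / 2 := funext key
    rw [hfe]
    fun_prop
  refine ⟨hants, hlim, ?_⟩
  intro Λ hΛ hνΛ
  have hneg : ∀ᶠ d in atTop, ν₁ d < 0 := hlim.eventually_lt_const (by linarith)
  obtain ⟨M, hM1, hM2⟩ := (hneg.and (eventually_ge_atTop (Λ + 1))).exists
  have hΛM : Λ ≤ M := by linarith
  have hIVT := intermediate_value_Icc' hΛM hcont.continuousOn
  have h0mem : (0:ℝ) ∈ Icc (ν₁ M) (ν₁ Λ) := ⟨le_of_lt hM1, le_of_lt hνΛ⟩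
  obtain ⟨dd, hdd, hdd0⟩ := hIVT h0mem
  have hddΛ : Λ < dd := by
    rcases lt_or_eq_of_le hdd.1 with h | h
    · exact h
    · exfalso; rw [← h] at hdd0; rw [hdd0] at hνΛ; exact lt_irrefl _ hνΛ
  have hdd0' : dd ∈ Ioi (0:ℝ) := mem_Ioi.2 (by linarith)
  refine ⟨dd, hddΛ, hdd0, ?_, ?_⟩
  · intro d hd hd0
    by_contra hne
    rcases lt_or_gt_of_ne hne with h | h
    · have := hants (mem_Ioi.2 (by linarith : (0:ℝ) < d)) hdd0' h
      rw [hd0, hdd0] at this; exact lt_irrefl _ this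
    · have := hants hdd0' (mem_Ioi.2 (by linarith : (0:ℝ) < d)) h
      rw [hd0, hdd0] at this; exact lt_irrefl _ this
  · intro d hd hne
    rcases lt_or_gt_of_ne hne with h | h
    · have hpos := hants (mem_Ioi.2 (by linarith : (0:ℝ) < d)) hdd0' h
      rw [hdd0] at hpos
      exact mul_neg_of_pos_of_neg hpos (by linarith)
    · have hneg' := hants hdd0' (mem_Ioi.2 (by linarith : (0:ℝ) < d)) h
      rw [hdd0] at hneg'
      exact mul_neg_of_neg_of_pos hneg' (by linarith)
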